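/- Let m ≥ 1 be an integer, δ a real number with δ > −m, τ := 3 + δ/m, and let n ≥ m be an integer. Then (1/(τ−1)) · ( Γ(n+δ) / ((n−m)! · Γ(m+δ)) ) · ∫_0^1 (1 − x^{1/(τ−1)})^{n−m} · x^{(m+δ+2−τ)/(τ−1)} dx = (m+δ)/((n+δ)(n+δ+1)), where Γ denotes the real Gamma function. -/

import Mathlib

open intervalIntegral in
lemma my_beta_nat (a : ℝ) (ha : 0 < a) (k : ℕ) :
    (∫ x in (0:ℝ)..1, x ^ a * (1 - x) ^ k)
      = k.factorial / ∏ j ∈ Finset.range (k + 1), (a + 1 + j) := by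
  have hu : 0 < ((a : ℂ) + 1).re := by simp; positivity
  have h := Complex.betaIntegral_eval_nat_add_one_right hu k
  have heq : Complex.betaIntegral ((a : ℂ) + 1) ((k : ℂ) + 1)
      = ((∫ x in (0:ℝ)..1, x ^ a * (1 - x) ^ k : ℝ) : ℂ) := by
    rw [Complex.betaIntegral, ← intervalIntegral.integral_ofReal]
    apply intervalIntegral.integral_congr
    intro x hx
    rw [Set.uIcc_of_le zero_le_one] at hx
    simp only
    rw [add_sub_cancel_right, add_sub_cancel_right, ← Complex.ofReal_cpow hx.1,
      Complex.cpow_natCast]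
    push_cast
    ring
  rw [heq] at h
  have hprod : (∏ j ∈ Finset.range (k + 1), ((a : ℂ) + 1 + (j : ℂ)))
      = ((∏ j ∈ Finset.range (k + 1), (a + 1 + (j : ℝ)) : ℝ) : ℂ) := by
    push_cast; ring
  rw [hprod] at h
  have := h
  rw [show ((k.factorial : ℕ) : ℂ) = ((k.factorial : ℝ) : ℂ) by push_cast; ring] at this
  rw [← Complex.ofReal_div] at this
  exact_mod_cast this

lemma my_Gamma_add_nat (x : ℝ) (hx : 0 < x) (k : ℕ) :
    Real.Gamma (x + k) = Real.Gamma x * ∏ j ∈ Finset.range k, (x + j) := by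
  induction k with
  | zero => simp
  | succ k ih =>
      have hxk : x + (k : ℝ) ≠ 0 := by positivity
      have : x + ((k : ℕ) + 1 : ℕ) = (x + k) + 1 := by push_cast; ring
      rw [this, Real.Gamma_add_one hxk, ih, Finset.prod_range_succ]
      ring

/-- **Degree distribution of younger children of the root in the Pólya point tree.**
For an integer `m ≥ 1`, a real `δ > -m`, `τ = 3 + δ/m`, and an integer `n ≥ m`,
`(1/(τ-1)) · (Γ(n+δ)/((n-m)!·Γ(m+δ))) · ∫_0^1 (1-x^{1/(τ-1)})^{n-m}·x^{(m+δ+2-τ)/(τ-1)} dx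
  = (m+δ)/((n+δ)(n+δ+1))`. -/
theorem polya_degree_pmf
    (m : ℕ) (hm : 1 ≤ m) (δ : ℝ) (hδ : -(m : ℝ) < δ)
    (τ : ℝ) (hτ : τ = 3 + δ / m)
    (n : ℕ) (hn : m ≤ n) :
    (1 / (τ - 1)) * (Real.Gamma ((n : ℝ) + δ) / (((n - m).factorial : ℝ) * Real.Gamma ((m : ℝ) + δ)))
        * ∫ x in (0:ℝ)..1, (1 - x ^ ((1 : ℝ) / (τ - 1))) ^ (n - m)
            * x ^ (((m : ℝ) + δ + 2 - τ) / (τ - 1))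
      = ((m : ℝ) + δ) / (((n : ℝ) + δ) * ((n : ℝ) + δ + 1)) := by
  have hm0 : (0:ℝ) < m := by exact_mod_cast hm
  have hm1 : (1:ℝ) ≤ m := by exact_mod_cast hm
  have hx0 : (0:ℝ) < (m:ℝ) + δ := by linarith
  have hdm : -1 < δ / m := (lt_div_iff₀ hm0).mpr (by linarith)
  have hτ1 : 1 < τ - 1 := by rw [hτ]; linarith
  have hτ0 : (0:ℝ) < τ - 1 := by linarith
  have hτ2 : (0:ℝ) < τ - 1 - 1 := by linarith
  set k := n - m with hk
  set e : ℝ := (m:ℝ) + δ + 2 - τ with he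
  have he0 : 0 ≤ e := by
    have heq : e = ((m:ℝ) - 1) * ((m:ℝ) + δ) / m := by
      rw [he, hτ]; field_simp; ring
    rw [heq]
    exact div_nonneg (mul_nonneg (by linarith) hx0.le) hm0.le
  set g : ℝ → ℝ := fun x => (1 - x ^ ((1:ℝ)/(τ-1)))^k * x ^ (e/(τ-1)) with hg
  have hgc : Continuous g := by
    apply Continuous.mul
    · exact (continuous_const.sub (Real.continuous_rpow_const (by positivity))).pow k
    · exact Real.continuous_rpow_const (div_nonneg he0 hτ0.le)
  have hchain : (∫ u in (0:ℝ)..1, g (u ^ (τ-1)) * ((τ-1) * u ^ (τ-1-1)))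
      = ∫ x in (0:ℝ)..1, g x := by
    have h := intervalIntegral.integral_comp_mul_deriv (a := (0:ℝ)) (b := 1)
      (f := fun u => u ^ (τ-1)) (f' := fun u => (τ-1) * u ^ (τ-1-1)) (g := g)
      (fun x _ => Real.hasDerivAt_rpow_const (Or.inr hτ1.le))
      ((continuous_const.mul (Real.continuous_rpow_const (by linarith))).continuousOn)
      hgc
    simpa [Real.zero_rpow hτ0.ne', Real.one_rpow, Function.comp] using h
  have hpt : Set.EqOn (fun u : ℝ => g (u ^ (τ-1)) * ((τ-1) * u ^ (τ-1-1)))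
      (fun u : ℝ => (τ-1) * (u ^ ((m:ℝ)+δ) * (1-u)^k)) (Set.uIcc (0:ℝ) 1) := by
    intro u hu
    rw [Set.uIcc_of_le zero_le_one] at hu
    simp only
    rcases eq_or_lt_of_le hu.1 with h0 | h0
    · rw [← h0]
      rw [Real.zero_rpow hτ2.ne', Real.zero_rpow hx0.ne']
      ring
    · have h1 : (u ^ (τ-1)) ^ ((1:ℝ)/(τ-1)) = u := by
        rw [← Real.rpow_mul h0.le, mul_one_div_cancel hτ0.ne', Real.rpow_one]
      have h2 : (u ^ (τ-1)) ^ (e/(τ-1)) = u ^ e := by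
        rw [← Real.rpow_mul h0.le, mul_div_cancel₀ e hτ0.ne']
      have h3 : u ^ e * u ^ (τ-1-1) = u ^ ((m:ℝ)+δ) := by
        rw [← Real.rpow_add h0]
        congr 1
        rw [he]; ring
      rw [hg]
      simp only
      rw [h1, h2]
      calc (1 - u) ^ k * u ^ e * ((τ-1) * u ^ (τ-1-1))
          = (τ-1) * (u ^ e * u ^ (τ-1-1) * (1-u)^k) := by ring
        _ = (τ-1) * (u ^ ((m:ℝ)+δ) * (1-u)^k) := by rw [h3]
  have hI : (∫ x in (0:ℝ)..1, (1 - x ^ ((1:ℝ)/(τ-1)))^k * x ^ (e/(τ-1)))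
      = (τ-1) * (k.factorial / ∏ j ∈ Finset.range (k+1), ((m:ℝ) + δ + 1 + j)) := by
    rw [show (∫ x in (0:ℝ)..1, (1 - x ^ ((1:ℝ)/(τ-1)))^k * x ^ (e/(τ-1)))
        = ∫ x in (0:ℝ)..1, g x from rfl]
    rw [← hchain, intervalIntegral.integral_congr hpt,
      intervalIntegral.integral_const_mul, my_beta_nat ((m:ℝ)+δ) hx0 k]
  rw [hI]
  -- Gamma algebra
  have hnk : (n:ℝ) = (m:ℝ) + (k:ℝ) := by
    have : n = m + k := by omega
    rw [this]; push_cast; ring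
  set x : ℝ := (m:ℝ) + δ with hxdef
  have hxk : (0:ℝ) < x + k := by positivity
  have hGnδ : (n:ℝ) + δ = x + k := by rw [hnk, hxdef]; ring
  have hA : Real.Gamma (x + k) = Real.Gamma x * ∏ j ∈ Finset.range k, (x + j) :=
    my_Gamma_add_nat x hx0 k
  have hA2 : Real.Gamma (x + (k+2 : ℕ)) = Real.Gamma x * ∏ j ∈ Finset.range (k+2), (x + j) :=
    my_Gamma_add_nat x hx0 (k+2)
  have hsplit : (∏ j ∈ Finset.range (k+2), (x + j))
      = x * ∏ j ∈ Finset.range (k+1), (x + 1 + j) := by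
    rw [Finset.prod_range_succ']
    simp only [Nat.cast_add, Nat.cast_one, Nat.cast_zero, add_zero]
    rw [mul_comm]
    congr 1
    apply Finset.prod_congr rfl
    intro j _
    ring
  have hstep : Real.Gamma (x + (k+2 : ℕ)) = (x + k + 1) * ((x + k) * Real.Gamma (x + k)) := by
    have e1 : x + ((k:ℕ)+2 : ℕ) = (x + k + 1) + 1 := by push_cast; ring
    have e2 : x + (k:ℝ) + 1 = (x + k) + 1 := by ring
    rw [e1, Real.Gamma_add_one (by positivity), e2, Real.Gamma_add_one hxk.ne']
  have hP : Real.Gamma x * (x * ∏ j ∈ Finset.range (k+1), (x + 1 + j))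
      = (x + k + 1) * ((x + k) * Real.Gamma (x + k)) := by
    rw [← hsplit, ← hA2, hstep]
  have hPpos : (0:ℝ) < ∏ j ∈ Finset.range (k+1), (x + 1 + j) :=
    Finset.prod_pos fun j _ => by positivity
  have hGpos : 0 < Real.Gamma x := Real.Gamma_pos_of_pos hx0
  have hGkpos : 0 < Real.Gamma (x + k) := Real.Gamma_pos_of_pos hxk
  have hfac : (0:ℝ) < (k.factorial : ℝ) := by exact_mod_cast k.factorial_pos
  rw [hGnδ]
  have hprd : ∏ j ∈ Finset.range (k+1), ((m:ℝ) + δ + 1 + j)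
      = ∏ j ∈ Finset.range (k+1), (x + 1 + j) := by
    rfl
  rw [hprd]
  have hxk1 : (0:ℝ) < x + k + 1 := by positivity
  field_simp
  linear_combination (-1 : ℝ) * hP
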